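/- Let k > 0 with kaₙ < A₁. If aₙbₙ − kaₙ ∈ Γₙ, then Ap(Γₙ, kaₙ+1) = Λ¹ ∪ ⋯ ∪ Λⁿ ∪ (1 + (Ap(Γₙ, kaₙ) ∩ Λⁿ⁺¹)). Otherwise, Ap(Γₙ, kaₙ+1) = Λ¹ ∪ ⋯ ∪ Λⁿ ∪ (1 + (Ap(Γₙ, kaₙ) ∩ Λⁿ⁺¹)) ∪ {aₙbₙ + 1}. -/

import Mathlib

/-- A numerical semigroup: an additive submonoid of ℕ with finite complement. -/
def IsNumericalSemigroup (Γ : Set ℕ) : Prop :=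
  0 ∈ Γ ∧ (∀ x ∈ Γ, ∀ y ∈ Γ, x + y ∈ Γ) ∧ Γᶜ.Finite

/-- The Apéry set Ap(Γ,x) = {s ∈ Γ : s - x ∉ Γ}. -/
def Ap (Γ : Set ℕ) (x : ℕ) : Set ℕ := {s ∈ Γ | ∀ t ∈ Γ, s ≠ t + x}

/-- The inductive numerical semigroups Γ₀ = ℕ, Γᵢ = aᵢ·Γ_{i-1} ∪ (aᵢbᵢ + ℕ). -/
def IndSG (a b : ℕ → ℕ) : ℕ → Set ℕ
  | 0 => Set.univ
  | i + 1 => (fun x => a (i + 1) * x) '' IndSG a b i ∪ {x | a (i + 1) * b (i + 1) ≤ x}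

set_option linter.unnecessarySimpa false
set_option linter.unusedVariables false

lemma mem_indSG_succ {a b : ℕ → ℕ} {i s : ℕ} :
    s ∈ IndSG a b (i + 1) ↔
      (∃ x, x ∈ IndSG a b i ∧ a (i + 1) * x = s) ∨ a (i + 1) * b (i + 1) ≤ s :=
  Iff.rfl

lemma mem_indSG_one {a b : ℕ → ℕ} {s : ℕ} :
    s ∈ IndSG a b 1 ↔ (∃ x, a 1 * x = s) ∨ a 1 * b 1 ≤ s := by
  simpa [IndSG] using mem_indSG_succ (a := a) (b := b) (i := 0) (s := s)

lemma indSG_mem_of_le (a b : ℕ → ℕ) (n : ℕ) (hn : 1 ≤ n) (x : ℕ) (hx : a n * b n ≤ x) :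
    x ∈ IndSG a b n := by
  obtain ⟨m, rfl⟩ : ∃ m, n = m + 1 := ⟨n - 1, by omega⟩
  exact Or.inr hx

lemma indSG_dvd (a b : ℕ → ℕ) (n : ℕ) (hn : 1 ≤ n) (s : ℕ) (hs : s ∈ IndSG a b n)
    (hlt : s < a n * b n) : a n ∣ s := by
  obtain ⟨m, rfl⟩ : ∃ m, n = m + 1 := ⟨n - 1, by omega⟩
  rcases mem_indSG_succ.1 hs with ⟨x, _, rfl⟩ | h
  · exact Dvd.intro x rfl
  · exact absurd h (by omega)

lemma indSG_small (a b : ℕ → ℕ) (n : ℕ) (hn : 1 ≤ n)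
    (ha : ∀ i, 1 ≤ i → i ≤ n → 2 ≤ a i)
    (hb : ∀ i, 1 ≤ i → i + 1 ≤ n → a i * b i ≤ b (i + 1)) (s : ℕ) :
    (s ∈ IndSG a b n ∧ s ≤ a n * b n) ↔
      ∃ l m, 1 ≤ l ∧ l ≤ n ∧ m ≤ b l ∧ (l = 1 ∨ a (l - 1) * b (l - 1) < m) ∧
        s = m * ∏ j ∈ Finset.Icc l n, a j := by
  induction n, hn using Nat.le_induction generalizing s with
  | base =>
    have ha1 : 2 ≤ a 1 := ha 1 le_rfl le_rfl
    constructor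
    · rintro ⟨hs, hle⟩
      rcases mem_indSG_one.1 hs with ⟨x, rfl⟩ | h
      · refine ⟨1, x, le_rfl, le_rfl, ?_, Or.inl rfl, ?_⟩
        · exact Nat.le_of_mul_le_mul_left hle (by omega)
        · simp [Finset.Icc_self, mul_comm]
      · refine ⟨1, b 1, le_rfl, le_rfl, le_rfl, Or.inl rfl, ?_⟩
        simp only [Finset.Icc_self, Finset.prod_singleton]
        rw [mul_comm]; omega
    · rintro ⟨l, m, hl1, hln, hmb, _, rfl⟩
      have hl : l = 1 := le_antisymm hln hl1
      subst hl
      simp only [Finset.Icc_self, Finset.prod_singleton]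
      constructor
      · exact mem_indSG_one.2 (Or.inl ⟨m, mul_comm _ _⟩)
      · rw [mul_comm]; exact Nat.mul_le_mul le_rfl hmb
  | succ n hn ih =>
    have ha' : ∀ i, 1 ≤ i → i ≤ n → 2 ≤ a i := fun i h1 h2 => ha i h1 (by omega)
    have hb' : ∀ i, 1 ≤ i → i + 1 ≤ n → a i * b i ≤ b (i + 1) :=
      fun i h1 h2 => hb i h1 (by omega)
    have hbn : a n * b n ≤ b (n + 1) := hb n hn le_rfl
    have han1 : 2 ≤ a (n + 1) := ha (n + 1) (by omega) le_rfl
    constructor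
    · rintro ⟨hs, hle⟩
      obtain ⟨x, hxΓ, hxle, rfl⟩ : ∃ x, x ∈ IndSG a b n ∧ x ≤ b (n + 1) ∧ s = a (n + 1) * x := by
        rcases mem_indSG_succ.1 hs with ⟨x, hx, rfl⟩ | h
        · exact ⟨x, hx, Nat.le_of_mul_le_mul_left hle (by omega), rfl⟩
        · have hseq : s = a (n + 1) * b (n + 1) := by omega
          exact ⟨b (n + 1), indSG_mem_of_le a b n hn _ hbn, le_rfl, hseq⟩
      by_cases hxc : x ≤ a n * b n
      · obtain ⟨l, m, hl1, hln, hmb, hdis, rfl⟩ := (ih ha' hb' x).1 ⟨hxΓ, hxc⟩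
        refine ⟨l, m, hl1, by omega, hmb, hdis, ?_⟩
        rw [Finset.prod_Icc_succ_top (by omega : l ≤ n + 1)]
        ring
      · refine ⟨n + 1, x, by omega, le_rfl, hxle, Or.inr ?_, ?_⟩
        · simp only [Nat.add_sub_cancel]; omega
        · simp [Finset.Icc_self, mul_comm]
    · rintro ⟨l, m, hl1, hln, hmb, hdis, rfl⟩
      by_cases hl : l ≤ n
      · have h := (ih ha' hb' (m * ∏ j ∈ Finset.Icc l n, a j)).2
          ⟨l, m, hl1, hl, hmb, hdis, rfl⟩
        rw [Finset.prod_Icc_succ_top (by omega : l ≤ n + 1), ← mul_assoc]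
        constructor
        · exact mem_indSG_succ.2 (Or.inl ⟨_, h.1, mul_comm _ _⟩)
        · calc m * (∏ j ∈ Finset.Icc l n, a j) * a (n + 1)
              ≤ a n * b n * a (n + 1) := Nat.mul_le_mul h.2 le_rfl
            _ ≤ b (n + 1) * a (n + 1) := Nat.mul_le_mul hbn le_rfl
            _ = a (n + 1) * b (n + 1) := mul_comm _ _
      · have hl' : l = n + 1 := by omega
        subst hl'
        have hgt : a n * b n < m := by
          rcases hdis with h | h
          · omega
          · simpa using h
        simp only [Finset.Icc_self, Finset.prod_singleton]
        constructor
        · exact mem_indSG_succ.2 (Or.inl ⟨m, indSG_mem_of_le a b n hn m (by omega), mul_comm _ _⟩)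
        · rw [mul_comm]; exact Nat.mul_le_mul le_rfl hmb

lemma prod_le_ab (a b : ℕ → ℕ) (n : ℕ) (hn : 1 ≤ n)
    (ha : ∀ i, 1 ≤ i → i ≤ n → 2 ≤ a i)
    (hb1 : 1 ≤ b 1)
    (hb : ∀ i, 1 ≤ i → i + 1 ≤ n → a i * b i ≤ b (i + 1)) :
    ∏ j ∈ Finset.Icc 1 n, a j ≤ a n * b n := by
  induction n, hn using Nat.le_induction with
  | base =>
    simp only [Finset.Icc_self, Finset.prod_singleton]
    calc a 1 = a 1 * 1 := (mul_one _).symm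
      _ ≤ a 1 * b 1 := Nat.mul_le_mul le_rfl hb1
  | succ n hn ih =>
    have ih' := ih (fun i h1 h2 => ha i h1 (by omega)) (fun i h1 h2 => hb i h1 (by omega))
    have hbn : a n * b n ≤ b (n + 1) := hb n hn (by omega)
    rw [Finset.prod_Icc_succ_top (by omega : 1 ≤ n + 1)]
    calc (∏ j ∈ Finset.Icc 1 n, a j) * a (n + 1) ≤ b (n + 1) * a (n + 1) :=
          Nat.mul_le_mul (le_trans ih' hbn) le_rfl
      _ = a (n + 1) * b (n + 1) := mul_comm _ _

theorem stmt10 (n : ℕ) (hn : 1 ≤ n) (a b : ℕ → ℕ)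
    (ha : ∀ i, 1 ≤ i → i ≤ n → 2 ≤ a i)
    (hb1 : 1 ≤ b 1)
    (hb : ∀ i, 1 ≤ i → i + 1 ≤ n → a i * b i ≤ b (i + 1))
    (A lam : ℕ → ℕ)
    (hA : ∀ i, A i = ∏ j ∈ Finset.Icc i n, a j)
    (hlam1 : lam 1 = b 1)
    (hlam : ∀ i, 2 ≤ i → i ≤ n → lam i = b i - a (i - 1) * b (i - 1))
    (Λ : ℕ → Set ℕ)
    (hΛ1 : Λ 1 = {x | ∃ m, m ≤ lam 1 ∧ x = m * A 1})
    (hΛk : ∀ k, 2 ≤ k → k ≤ n →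
      Λ k = {x | ∃ m, 1 ≤ m ∧ m ≤ lam k ∧ x = b (k - 1) * A (k - 1) + m * A k})
    (hΛn1 : Λ (n + 1) = {x | a n * b n + 1 ≤ x})
    (k : ℕ) (hk0 : 0 < k) (hkA : k * a n < A 1) :
    (a n * b n - k * a n ∈ IndSG a b n →
      Ap (IndSG a b n) (k * a n + 1)
        = {y | ∃ l, 1 ≤ l ∧ l ≤ n ∧ y ∈ Λ l}
          ∪ (fun y => 1 + y) '' (Ap (IndSG a b n) (k * a n) ∩ Λ (n + 1)))
    ∧ (a n * b n - k * a n ∉ IndSG a b n →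
      Ap (IndSG a b n) (k * a n + 1)
        = {y | ∃ l, 1 ≤ l ∧ l ≤ n ∧ y ∈ Λ l}
          ∪ (fun y => 1 + y) '' (Ap (IndSG a b n) (k * a n) ∩ Λ (n + 1))
          ∪ {a n * b n + 1}) := by
  set Γ := IndSG a b n with hΓ
  set c := a n * b n with hc
  have han : 2 ≤ a n := ha n hn le_rfl
  have hA1c : A 1 ≤ c := by rw [hA 1]; exact prod_le_ab a b n hn ha hb1 hb
  have hkc : k * a n < c := lt_of_lt_of_le hkA hA1c
  -- translation of Λ l into "struct" form
  have hΛiff : ∀ l, 1 ≤ l → l ≤ n → ∀ s, s ∈ Λ l ↔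
      ∃ m, m ≤ b l ∧ (l = 1 ∨ a (l - 1) * b (l - 1) < m) ∧
        s = m * ∏ j ∈ Finset.Icc l n, a j := by
    intro l hl1 hln s
    rcases eq_or_lt_of_le hl1 with h1 | h2
    · subst h1
      rw [hΛ1, hlam1, hA 1]
      simp only [Set.mem_setOf_eq]
      constructor
      · rintro ⟨m, hm, rfl⟩; exact ⟨m, hm, by simp, rfl⟩
      · rintro ⟨m, hm, _, rfl⟩; exact ⟨m, hm, rfl⟩
    · have h2 : 2 ≤ l := h2
      have hab : a (l - 1) * b (l - 1) ≤ b l := by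
        have := hb (l - 1) (by omega) (by omega)
        simpa [show l - 1 + 1 = l by omega] using this
      have hprod : ∏ j ∈ Finset.Icc (l - 1) n, a j
          = a (l - 1) * ∏ j ∈ Finset.Icc l n, a j := by
        rw [show Finset.Icc (l - 1) n = insert (l - 1) (Finset.Icc l n) by
          ext j; simp only [Finset.mem_Icc, Finset.mem_insert]; omega]
        exact Finset.prod_insert (by simp only [Finset.mem_Icc]; omega)
      rw [hΛk l h2 hln, hlam l h2 hln, hA l, hA (l - 1), hprod]
      simp only [Set.mem_setOf_eq]
      constructor
      · rintro ⟨m', hm1, hm2, rfl⟩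
        refine ⟨a (l - 1) * b (l - 1) + m', by omega, Or.inr (by omega), by ring⟩
      · rintro ⟨m, hm, hdis, rfl⟩
        have hgt : a (l - 1) * b (l - 1) < m := by
          rcases hdis with h | h
          · omega
          · exact h
        refine ⟨m - a (l - 1) * b (l - 1), by omega, by omega, ?_⟩
        have hm' : m = a (l - 1) * b (l - 1) + (m - a (l - 1) * b (l - 1)) := by omega
        rw [hm']; ring_nf
        rw [show a (l-1) * b (l-1) + (m - a (l-1) * b (l-1)) = m by omega]
        rw [hm']; ring
  have hsmall : ∀ s, (s ∈ Γ ∧ s ≤ c) ↔ ∃ l, 1 ≤ l ∧ l ≤ n ∧ s ∈ Λ l := by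
    intro s
    rw [hΓ, hc, indSG_small a b n hn ha hb s]
    constructor
    · rintro ⟨l, m, hl1, hln, hmb, hdis, rfl⟩
      exact ⟨l, hl1, hln, (hΛiff l hl1 hln _).2 ⟨m, hmb, hdis, rfl⟩⟩
    · rintro ⟨l, hl1, hln, hs⟩
      obtain ⟨m, hmb, hdis, rfl⟩ := (hΛiff l hl1 hln _).1 hs
      exact ⟨l, m, hl1, hln, hmb, hdis, rfl⟩
  have hSdvd : ∀ s, (∃ l, 1 ≤ l ∧ l ≤ n ∧ s ∈ Λ l) → a n ∣ s := by
    rintro s ⟨l, hl1, hln, hs⟩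
    obtain ⟨m, _, _, rfl⟩ := (hΛiff l hl1 hln _).1 hs
    exact Dvd.dvd.mul_left (Finset.dvd_prod_of_mem a (by simp only [Finset.mem_Icc]; omega)) m
  -- the key characterization
  have key : ∀ s, s ∈ Ap Γ (k * a n + 1) ↔
      ((∃ l, 1 ≤ l ∧ l ≤ n ∧ s ∈ Λ l)
        ∨ (∃ y, y ∈ Ap Γ (k * a n) ∩ Λ (n + 1) ∧ 1 + y = s)
        ∨ (s = c + 1 ∧ c - k * a n ∉ Γ)) := by
    intro s
    constructor
    · rintro ⟨hsΓ, hap⟩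
      by_cases hle : s ≤ c
      · exact Or.inl ((hsmall s).1 ⟨hsΓ, hle⟩)
      · by_cases hs1 : s = c + 1
        · subst hs1
          refine Or.inr (Or.inr ⟨rfl, fun hmem => ?_⟩)
          exact hap (c - k * a n) hmem (by omega)
        · -- s ≥ c + 2
          have hs2 : c + 2 ≤ s := by omega
          refine Or.inr (Or.inl ⟨s - 1, ⟨⟨?_, ?_⟩, ?_⟩, by omega⟩)
          · exact indSG_mem_of_le a b n hn _ (by omega)
          · intro t ht heq
            exact hap t ht (by omega)
          · rw [hΛn1]; simp only [Set.mem_setOf_eq]; omega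
    · rintro (hS | ⟨y, ⟨⟨hyΓ, hyap⟩, hyΛ⟩, rfl⟩ | ⟨rfl, hnot⟩)
      · obtain ⟨hsΓ, hsc⟩ := (hsmall s).2 hS
        have hds : a n ∣ s := hSdvd s hS
        refine ⟨hsΓ, fun t ht heq => ?_⟩
        have htc : t < c := by omega
        have hdt : a n ∣ t := indSG_dvd a b n hn t ht htc
        have h1 : a n ∣ s - (t + k * a n) :=
          Nat.dvd_sub hds (Nat.dvd_add hdt (dvd_mul_left _ _))
        have h2 : s - (t + k * a n) = 1 := by omega
        have := Nat.le_of_dvd one_pos (h2 ▸ h1)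
        omega
      · have hyc : c + 1 ≤ y := by
          rw [hΛn1] at hyΛ; exact hyΛ
        refine ⟨indSG_mem_of_le a b n hn _ (by omega), fun t ht heq => ?_⟩
        exact hyap t ht (by omega)
      · refine ⟨indSG_mem_of_le a b n hn _ (by omega), fun t ht heq => ?_⟩
        have : t = c - k * a n := by omega
        exact hnot (this ▸ ht)
  constructor
  · intro hmem
    ext s
    rw [Set.mem_union, Set.mem_image, key s]
    constructor
    · rintro (h | h | ⟨_, hno⟩)
      · exact Or.inl h
      · obtain ⟨y, hy, hys⟩ := h
        exact Or.inr ⟨y, hy, hys⟩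
      · exact absurd hmem hno
    · rintro (h | ⟨y, hy, hys⟩)
      · exact Or.inl h
      · exact Or.inr (Or.inl ⟨y, hy, hys⟩)
  · intro hmem
    ext s
    rw [Set.mem_union, Set.mem_union, Set.mem_image, Set.mem_singleton_iff, key s]
    constructor
    · rintro (h | h | ⟨hs, _⟩)
      · exact Or.inl (Or.inl h)
      · obtain ⟨y, hy, hys⟩ := h
        exact Or.inl (Or.inr ⟨y, hy, hys⟩)
      · exact Or.inr hs
    · rintro ((h | ⟨y, hy, hys⟩) | hs)
      · exact Or.inl h
      · exact Or.inr (Or.inl ⟨y, hy, hys⟩)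
      · exact Or.inr (Or.inr ⟨hs, hmem⟩)
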